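/- Let Y ∈ ℝ^{n×d}, x* ∈ ℝ^n, β > 0, and let D_1, …, D_ℓ be the ReLU sign-pattern matrices of Y. Let (w_i, z_i)_{i=1}^ℓ be any feasible point of the convex dual program, i.e., (2D_i − I)Y w_i ≥ 0 and (2D_i − I)Y z_i ≥ 0 componentwise for all i, with dual objective value F = (1/2)‖Σ_{i=1}^ℓ D_i Y (w_i − z_i) − x*‖_2² + β Σ_{i=1}^ℓ (‖w_i‖_2 + ‖z_i‖_2). Then there exist primal weights with m = 2ℓ neurons (taking, for each nonzero w_i, the neuron (w_i/√‖w_i‖_2, √‖w_i‖_2), and for each nonzero z_i the neuron (z_i/√‖z_i‖_2, −√‖z_i‖_2)) whose primal objective value equals F. Consequently p*_m ≤ d* for every m ≥ 2ℓ. -/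
import Mathlib


open Matrix Finset

noncomputable section

/-- Euclidean (ℓ2) norm of a vector in ℝ^k. -/
def l2 {k : ℕ} (x : Fin k → ℝ) : ℝ := Real.sqrt (∑ i, (x i) ^ 2)

/-- Componentwise ReLU. -/
def relu {k : ℕ} (x : Fin k → ℝ) : Fin k → ℝ := fun i => max (x i) 0

/-- The set of ReLU sign-pattern matrices of `Y`: diagonal 0/1 matrices
`Diag(1_{Yu ≥ 0})` as `u` ranges over the closed unit ball. -/
def signPatterns {n d : ℕ} (Y : Matrix (Fin n) (Fin d) ℝ) :
    Set (Matrix (Fin n) (Fin n) ℝ) :=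
  { M | ∃ u : Fin d → ℝ, l2 u ≤ 1 ∧
      M = Matrix.diagonal (fun i => if 0 ≤ Y.mulVec u i then (1 : ℝ) else 0) }

/-- Primal (non-convex) training objective with `m` neurons. -/
def primalObj {n d : ℕ} (Y : Matrix (Fin n) (Fin d) ℝ) (xs : Fin n → ℝ) (β : ℝ)
    (m : ℕ) (u : Fin m → Fin d → ℝ) (v : Fin m → ℝ) : ℝ :=
  (1 / 2) * l2 ((∑ j, v j • relu (Y.mulVec (u j))) - xs) ^ 2
    + (β / 2) * ∑ j, (l2 (u j) ^ 2 + |v j| ^ 2)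

/-- Optimal value of the primal training problem with `m` neurons. -/
def pStar {n d : ℕ} (Y : Matrix (Fin n) (Fin d) ℝ) (xs : Fin n → ℝ) (β : ℝ)
    (m : ℕ) : ℝ :=
  sInf { c | ∃ u : Fin m → Fin d → ℝ, ∃ v : Fin m → ℝ, c = primalObj Y xs β m u v }

/-- Dual feasibility: `(2 Dᵢ − I) Y wᵢ ≥ 0` componentwise for every `i`. -/
def dualFeasible {n d ℓ : ℕ} (Y : Matrix (Fin n) (Fin d) ℝ)
    (D : Fin ℓ → Matrix (Fin n) (Fin n) ℝ) (w : Fin ℓ → Fin d → ℝ) : Prop :=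
  ∀ i j, 0 ≤ ((2 • D i - 1).mulVec (Y.mulVec (w i))) j

/-- Convex dual objective. -/
def dualObj {n d ℓ : ℕ} (Y : Matrix (Fin n) (Fin d) ℝ) (xs : Fin n → ℝ) (β : ℝ)
    (D : Fin ℓ → Matrix (Fin n) (Fin n) ℝ) (w z : Fin ℓ → Fin d → ℝ) : ℝ :=
  (1 / 2) * l2 ((∑ i, (D i).mulVec (Y.mulVec (w i - z i))) - xs) ^ 2
    + β * ∑ i, (l2 (w i) + l2 (z i))

/-- Optimal value of the convex dual program. -/
def dStar {n d ℓ : ℕ} (Y : Matrix (Fin n) (Fin d) ℝ) (xs : Fin n → ℝ) (β : ℝ)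
    (D : Fin ℓ → Matrix (Fin n) (Fin n) ℝ) : ℝ :=
  sInf { c | ∃ w z : Fin ℓ → Fin d → ℝ,
    dualFeasible Y D w ∧ dualFeasible Y D z ∧ c = dualObj Y xs β D w z }

end

open Classical in
/-- First-layer neuron `wᵢ/√‖wᵢ‖₂` built from a dual variable (zero if `wᵢ = 0`). -/
noncomputable def neuronU {d ℓ : ℕ} (w : Fin ℓ → Fin d → ℝ) : Fin ℓ → Fin d → ℝ :=
  fun i => if w i = 0 then 0 else (Real.sqrt (l2 (w i)))⁻¹ • w i

open Classical in
/-- Second-layer weight `√‖wᵢ‖₂` built from a dual variable `wᵢ` (zero if `wᵢ = 0`). -/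
noncomputable def neuronVpos {d ℓ : ℕ} (w : Fin ℓ → Fin d → ℝ) : Fin ℓ → ℝ :=
  fun i => if w i = 0 then 0 else Real.sqrt (l2 (w i))

open Classical in
/-- Second-layer weight `−√‖zᵢ‖₂` built from a dual variable `zᵢ` (zero if `zᵢ = 0`). -/
noncomputable def neuronVneg {d ℓ : ℕ} (z : Fin ℓ → Fin d → ℝ) : Fin ℓ → ℝ :=
  fun i => if z i = 0 then 0 else -Real.sqrt (l2 (z i))

/-- Stacked first-layer weights with `2ℓ` neurons: the first `ℓ` built from `w`,
the last `ℓ` built from `z`. -/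
noncomputable def stackU {d ℓ : ℕ} (w z : Fin ℓ → Fin d → ℝ) :
    Fin (2 * ℓ) → Fin d → ℝ :=
  fun k =>
    if h : (k : ℕ) < ℓ then neuronU w ⟨k, h⟩
    else neuronU z ⟨(k : ℕ) - ℓ, by have := k.isLt; omega⟩

/-- Stacked second-layer weights with `2ℓ` neurons. -/
noncomputable def stackV {d ℓ : ℕ} (w z : Fin ℓ → Fin d → ℝ) : Fin (2 * ℓ) → ℝ :=
  fun k =>
    if h : (k : ℕ) < ℓ then neuronVpos w ⟨k, h⟩
    else neuronVneg z ⟨(k : ℕ) - ℓ, by have := k.isLt; omega⟩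

section Helpers

lemma l2_nonneg' {k : ℕ} (x : Fin k → ℝ) : 0 ≤ l2 x := Real.sqrt_nonneg _

lemma l2_zero' {k : ℕ} : l2 (0 : Fin k → ℝ) = 0 := by simp [l2]

lemma l2_pos' {k : ℕ} {x : Fin k → ℝ} (h : x ≠ 0) : 0 < l2 x := by
  have : ∃ i, x i ≠ 0 := by
    by_contra hc; push_neg at hc; exact h (funext hc)
  obtain ⟨i, hi⟩ := this
  refine Real.sqrt_pos.2 (Finset.sum_pos' (fun j _ => sq_nonneg _) ⟨i, Finset.mem_univ i, ?_⟩)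
  positivity

lemma l2_smul' {k : ℕ} (c : ℝ) (x : Fin k → ℝ) : l2 (c • x) = |c| * l2 x := by
  unfold l2
  rw [show ∑ i, ((c • x) i) ^ 2 = c ^ 2 * ∑ i, (x i) ^ 2 by
    simp [Finset.mul_sum, mul_pow]]
  rw [Real.sqrt_mul (sq_nonneg c), Real.sqrt_sq_eq_abs]

lemma sum_split_two' {M : Type*} [AddCommMonoid M] {ℓ : ℕ} (g : Fin (2 * ℓ) → M) :
    ∑ k, g k = (∑ i : Fin ℓ, g ⟨i.val, by omega⟩) + ∑ i : Fin ℓ, g ⟨ℓ + i.val, by omega⟩ := by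
  have he : ∑ k : Fin (ℓ + ℓ), g (Fin.cast (by ring) k) = ∑ k : Fin (2 * ℓ), g k :=
    Fintype.sum_equiv (finCongr (by ring : ℓ + ℓ = 2 * ℓ)) _ _ (fun _ => rfl)
  rw [← he, Fin.sum_univ_add]
  congr 1

lemma sum_pad' {M : Type*} [AddCommMonoid M] {a m : ℕ} (h : a ≤ m) (f : Fin a → M) :
    ∑ j : Fin m, (if hj : (j : ℕ) < a then f ⟨j, hj⟩ else 0) = ∑ j, f j := by
  rw [Fin.sum_univ_eq_sum_range (fun j => if hj : j < a then f ⟨j, hj⟩ else 0) m]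
  rw [← Finset.sum_subset (Finset.range_subset_range.2 h)
    (fun x _ hx => by rw [dif_neg (by simpa using hx)])]
  rw [← Fin.sum_univ_eq_sum_range (fun j => if hj : j < a then f ⟨j, hj⟩ else 0) a]
  exact Finset.sum_congr rfl fun j _ => by rw [dif_pos j.isLt]

/-- Dual feasibility + sign pattern structure gives `D_i Y w_i = relu (Y w_i)`. -/
lemma reluD {n d ℓ : ℕ} (Y : Matrix (Fin n) (Fin d) ℝ)
    (D : Fin ℓ → Matrix (Fin n) (Fin n) ℝ) (hrange : Set.range D = signPatterns Y)
    (w : Fin ℓ → Fin d → ℝ) (hw : dualFeasible Y D w) (i : Fin ℓ) :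
    (D i).mulVec (Y.mulVec (w i)) = relu (Y.mulVec (w i)) := by
  have hmem : D i ∈ signPatterns Y := by
    rw [← hrange]; exact ⟨i, rfl⟩
  obtain ⟨u, -, hDi⟩ := hmem
  set x := Y.mulVec (w i) with hx
  set c : Fin n → ℝ := fun j => if 0 ≤ Y.mulVec u j then (1 : ℝ) else 0 with hc
  have hfeas : ∀ j, 0 ≤ 2 * (c j * x j) - x j := by
    intro j
    have := hw i j
    rwa [show (2 • D i - 1) = D i + D i - 1 by rw [two_smul],
      Matrix.sub_mulVec, Matrix.add_mulVec, Matrix.one_mulVec, hDi,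
      Pi.sub_apply, Pi.add_apply, Matrix.mulVec_diagonal, ← hx, ← two_mul] at this
  funext j
  rw [hDi, Matrix.mulVec_diagonal]
  have hfj := hfeas j
  by_cases hj : 0 ≤ Y.mulVec u j
  · have hcj : c j = 1 := if_pos hj
    rw [hcj] at hfj ⊢
    have : 0 ≤ x j := by linarith
    simp [relu, max_eq_left this]
  · have hcj : c j = 0 := if_neg hj
    rw [hcj] at hfj ⊢
    have : x j ≤ 0 := by linarith
    simp [relu, max_eq_right this]

lemma relu_smul {k : ℕ} {c : ℝ} (hc : 0 ≤ c) (x : Fin k → ℝ) :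
    relu (c • x) = c • relu x := by
  funext j
  simp only [relu, Pi.smul_apply, smul_eq_mul]
  rw [mul_max_of_nonneg _ _ hc, mul_zero]

lemma neuron_pos {n d ℓ : ℕ} (Y : Matrix (Fin n) (Fin d) ℝ)
    (w : Fin ℓ → Fin d → ℝ) (i : Fin ℓ) :
    neuronVpos w i • relu (Y.mulVec (neuronU w i)) = relu (Y.mulVec (w i)) := by
  unfold neuronVpos neuronU
  by_cases h : w i = 0
  · funext j; simp [h, relu, Matrix.mulVec_zero]
  · have hs : 0 < Real.sqrt (l2 (w i)) := Real.sqrt_pos.2 (l2_pos' h)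
    rw [if_neg h, if_neg h, Matrix.mulVec_smul, relu_smul (by positivity),
      smul_smul, mul_inv_cancel₀ hs.ne', one_smul]

lemma neuron_neg {n d ℓ : ℕ} (Y : Matrix (Fin n) (Fin d) ℝ)
    (z : Fin ℓ → Fin d → ℝ) (i : Fin ℓ) :
    neuronVneg z i • relu (Y.mulVec (neuronU z i)) = -relu (Y.mulVec (z i)) := by
  unfold neuronVneg neuronU
  by_cases h : z i = 0
  · funext j; simp [h, relu, Matrix.mulVec_zero]
  · have hs : 0 < Real.sqrt (l2 (z i)) := Real.sqrt_pos.2 (l2_pos' h)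
    rw [if_neg h, if_neg h, Matrix.mulVec_smul, relu_smul (by positivity),
      smul_smul, neg_mul, mul_inv_cancel₀ hs.ne', neg_smul, one_smul]

lemma neuron_norm_pos {d ℓ : ℕ} (w : Fin ℓ → Fin d → ℝ) (i : Fin ℓ) :
    l2 (neuronU w i) ^ 2 + |neuronVpos w i| ^ 2 = 2 * l2 (w i) := by
  unfold neuronVpos neuronU
  by_cases h : w i = 0
  · simp [h, l2_zero']
  · have hl : 0 < l2 (w i) := l2_pos' h
    have hs : 0 < Real.sqrt (l2 (w i)) := Real.sqrt_pos.2 hl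
    rw [if_neg h, if_neg h, l2_smul', abs_of_pos (inv_pos.2 hs),
      abs_of_pos hs, mul_pow, inv_pow, Real.sq_sqrt hl.le]
    field_simp
    ring

lemma neuron_norm_neg {d ℓ : ℕ} (z : Fin ℓ → Fin d → ℝ) (i : Fin ℓ) :
    l2 (neuronU z i) ^ 2 + |neuronVneg z i| ^ 2 = 2 * l2 (z i) := by
  unfold neuronVneg neuronU
  by_cases h : z i = 0
  · simp [h, l2_zero']
  · have hl : 0 < l2 (z i) := l2_pos' h
    have hs : 0 < Real.sqrt (l2 (z i)) := Real.sqrt_pos.2 hl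
    rw [if_neg h, if_neg h, l2_smul', abs_of_pos (inv_pos.2 hs),
      abs_neg, abs_of_pos hs, mul_pow, inv_pow, Real.sq_sqrt hl.le]
    field_simp
    ring

/-- stackU/stackV evaluation lemmas. -/
lemma stackU_lo {d ℓ : ℕ} (w z : Fin ℓ → Fin d → ℝ) (i : Fin ℓ) :
    stackU w z ⟨i.val, by omega⟩ = neuronU w i := by
  simp only [stackU, dif_pos i.isLt]

lemma stackU_hi {d ℓ : ℕ} (w z : Fin ℓ → Fin d → ℝ) (i : Fin ℓ) :
    stackU w z ⟨ℓ + i.val, by omega⟩ = neuronU z i := by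
  have h : ¬ (ℓ + i.val < ℓ) := by omega
  simp only [stackU, dif_neg h]
  congr 1
  ext
  simp

lemma stackV_lo {d ℓ : ℕ} (w z : Fin ℓ → Fin d → ℝ) (i : Fin ℓ) :
    stackV w z ⟨i.val, by omega⟩ = neuronVpos w i := by
  simp only [stackV, dif_pos i.isLt]

lemma stackV_hi {d ℓ : ℕ} (w z : Fin ℓ → Fin d → ℝ) (i : Fin ℓ) :
    stackV w z ⟨ℓ + i.val, by omega⟩ = neuronVneg z i := by
  have h : ¬ (ℓ + i.val < ℓ) := by omega
  simp only [stackV, dif_neg h]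
  congr 1
  ext
  simp

/-- Key reconstruction lemma: primal value of the stacked weights equals dual value. -/
lemma key_recon {n d ℓ : ℕ} (Y : Matrix (Fin n) (Fin d) ℝ) (xs : Fin n → ℝ) (β : ℝ)
    (D : Fin ℓ → Matrix (Fin n) (Fin n) ℝ) (hrange : Set.range D = signPatterns Y)
    (w z : Fin ℓ → Fin d → ℝ) (hw : dualFeasible Y D w) (hz : dualFeasible Y D z) :
    primalObj Y xs β (2 * ℓ) (stackU w z) (stackV w z) = dualObj Y xs β D w z := by
  unfold primalObj dualObj
  have hS : ∑ k, stackV w z k • relu (Y.mulVec (stackU w z k))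
      = ∑ i, (D i).mulVec (Y.mulVec (w i - z i)) := by
    rw [sum_split_two' (fun k => stackV w z k • relu (Y.mulVec (stackU w z k)))]
    have h1 : ∀ i : Fin ℓ,
        stackV w z ⟨i.val, by omega⟩ • relu (Y.mulVec (stackU w z ⟨i.val, by omega⟩))
          = relu (Y.mulVec (w i)) := fun i => by
      rw [stackV_lo, stackU_lo, neuron_pos]
    have h2 : ∀ i : Fin ℓ,
        stackV w z ⟨ℓ + i.val, by omega⟩ • relu (Y.mulVec (stackU w z ⟨ℓ + i.val, by omega⟩))
          = -relu (Y.mulVec (z i)) := fun i => by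
      rw [stackV_hi, stackU_hi, neuron_neg]
    rw [Finset.sum_congr rfl (fun i _ => h1 i), Finset.sum_congr rfl (fun i _ => h2 i)]
    rw [← Finset.sum_add_distrib]
    refine Finset.sum_congr rfl fun i _ => ?_
    rw [Matrix.mulVec_sub, Matrix.mulVec_sub, reluD Y D hrange w hw i,
      reluD Y D hrange z hz i]
    abel
  have hT : ∑ k, (l2 (stackU w z k) ^ 2 + |stackV w z k| ^ 2)
      = 2 * ∑ i, (l2 (w i) + l2 (z i)) := by
    rw [sum_split_two' (fun k => l2 (stackU w z k) ^ 2 + |stackV w z k| ^ 2)]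
    have h1 : ∀ i : Fin ℓ,
        l2 (stackU w z ⟨i.val, by omega⟩) ^ 2 + |stackV w z ⟨i.val, by omega⟩| ^ 2
          = 2 * l2 (w i) := fun i => by rw [stackU_lo, stackV_lo, neuron_norm_pos]
    have h2 : ∀ i : Fin ℓ,
        l2 (stackU w z ⟨ℓ + i.val, by omega⟩) ^ 2 + |stackV w z ⟨ℓ + i.val, by omega⟩| ^ 2
          = 2 * l2 (z i) := fun i => by rw [stackU_hi, stackV_hi, neuron_norm_neg]
    rw [Finset.sum_congr rfl (fun i _ => h1 i), Finset.sum_congr rfl (fun i _ => h2 i)]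
    rw [Finset.mul_sum]
    rw [← Finset.sum_add_distrib]
    refine Finset.sum_congr rfl fun i _ => by ring
  rw [hS, hT]
  ring

end Helpers

/-- **Weak duality via reconstruction.** Any dual-feasible point
`(w, z)` yields primal weights with `m = 2ℓ` neurons attaining primal objective
value equal to the dual objective value; consequently `p*_m ≤ d*` for all `m ≥ 2ℓ`. -/
theorem dual_feasible_gives_primal_weights {n d ℓ : ℕ}
    (Y : Matrix (Fin n) (Fin d) ℝ) (xs : Fin n → ℝ) (β : ℝ) (hβ : 0 < β)
    (D : Fin ℓ → Matrix (Fin n) (Fin n) ℝ)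
    (hinj : Function.Injective D) (hrange : Set.range D = signPatterns Y)
    (w z : Fin ℓ → Fin d → ℝ)
    (hw : dualFeasible Y D w) (hz : dualFeasible Y D z) :
    primalObj Y xs β (2 * ℓ) (stackU w z) (stackV w z) = dualObj Y xs β D w z ∧
    ∀ m, 2 * ℓ ≤ m → pStar Y xs β m ≤ dStar Y xs β D := by
  refine ⟨key_recon Y xs β D hrange w z hw hz, ?_⟩
  intro m hm
  have hnn : ∀ (u : Fin m → Fin d → ℝ) (v : Fin m → ℝ), 0 ≤ primalObj Y xs β m u v := by
    intro u v
    unfold primalObj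
    have h1 : 0 ≤ ∑ j, (l2 (u j) ^ 2 + |v j| ^ 2) :=
      Finset.sum_nonneg fun j _ => by positivity
    have h2 : (0:ℝ) ≤ (1 / 2) * l2 ((∑ j, v j • relu (Y.mulVec (u j))) - xs) ^ 2 := by
      positivity
    have h3 : (0:ℝ) ≤ β / 2 := by linarith
    nlinarith
  have hbdd : BddBelow {c | ∃ u : Fin m → Fin d → ℝ, ∃ v : Fin m → ℝ,
      c = primalObj Y xs β m u v} := by
    refine ⟨0, fun c hc => ?_⟩
    obtain ⟨u, v, rfl⟩ := hc
    exact hnn u v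
  apply le_csInf
  · exact ⟨dualObj Y xs β D w z, w, z, hw, hz, rfl⟩
  · rintro c ⟨w', z', hw', hz', rfl⟩
    classical
    set u' : Fin m → Fin d → ℝ :=
      fun k => if h : (k : ℕ) < 2 * ℓ then stackU w' z' ⟨k, h⟩ else 0 with hu'
    set v' : Fin m → ℝ :=
      fun k => if h : (k : ℕ) < 2 * ℓ then stackV w' z' ⟨k, h⟩ else 0 with hv'
    have hpad : primalObj Y xs β m u' v'
        = primalObj Y xs β (2 * ℓ) (stackU w' z') (stackV w' z') := by
      unfold primalObj
      have hv : ∑ j : Fin m, v' j • relu (Y.mulVec (u' j))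
          = ∑ j : Fin (2 * ℓ), stackV w' z' j • relu (Y.mulVec (stackU w' z' j)) := by
        rw [← sum_pad' hm (fun j => stackV w' z' j • relu (Y.mulVec (stackU w' z' j)))]
        refine Finset.sum_congr rfl fun j _ => ?_
        by_cases h : (j : ℕ) < 2 * ℓ
        · simp only [hu', hv', dif_pos h]
        · simp only [hu', hv', dif_neg h, zero_smul]
      have hs : ∑ j : Fin m, (l2 (u' j) ^ 2 + |v' j| ^ 2)
          = ∑ j : Fin (2 * ℓ), (l2 (stackU w' z' j) ^ 2 + |stackV w' z' j| ^ 2) := by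
        rw [← sum_pad' hm (fun j => l2 (stackU w' z' j) ^ 2 + |stackV w' z' j| ^ 2)]
        refine Finset.sum_congr rfl fun j _ => ?_
        by_cases h : (j : ℕ) < 2 * ℓ
        · simp only [hu', hv', dif_pos h]
        · simp only [hu', hv', dif_neg h, l2_zero', abs_zero]
          norm_num
      rw [hv, hs]
    have hmem : primalObj Y xs β m u' v' ∈ {c | ∃ u : Fin m → Fin d → ℝ,
        ∃ v : Fin m → ℝ, c = primalObj Y xs β m u v} := ⟨u', v', rfl⟩
    calc pStar Y xs β m ≤ primalObj Y xs β m u' v' := csInf_le hbdd hmem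
      _ = dualObj Y xs β D w' z' := by
          rw [hpad, key_recon Y xs β D hrange w' z' hw' hz']
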